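/- For every v ∈ ℝ^q, there exist an optimal solution (x^v, z^v) of (P(v)) and an optimal solution w^v of its Lagrange dual (D(v)), and strong duality holds: there exist x^v ∈ X and z^v ∈ ℝ^q with Γ(x^v) − z^v − v ≤_C 0 and ‖z^v‖ = d(v,P), and there exists w^v ∈ C⁺ with ‖w^v‖_* ≤ 1 such that inf_{x∈X} (w^v)ᵀΓ(x) − (w^v)ᵀv = ‖z^v‖. -/

import Mathlib

open Set Pointwise

noncomputable section

/-- Dot product on `Fin q → ℝ`. -/
def dotp {q : ℕ} (w y : Fin q → ℝ) : ℝ := ∑ i, w i * y i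

/-- `N` is a norm on `Fin q → ℝ`. -/
def IsNormFn {q : ℕ} (N : (Fin q → ℝ) → ℝ) : Prop :=
  (∀ z, N z = 0 ↔ z = 0) ∧ (∀ (a : ℝ) (z : Fin q → ℝ), N (a • z) = |a| * N z) ∧
    (∀ z w, N (z + w) ≤ N z + N w)

/-- Dual norm of `N`. -/
def dualNormFn {q : ℕ} (N : (Fin q → ℝ) → ℝ) (w : Fin q → ℝ) : ℝ :=
  sSup ((fun z => dotp w z) '' {z | N z ≤ 1})

/-- Distance (w.r.t. the norm `N`) from a point to a set. -/
def distFn {q : ℕ} (N : (Fin q → ℝ) → ℝ) (v : Fin q → ℝ) (A : Set (Fin q → ℝ)) : ℝ :=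
  sInf ((fun y => N (v - y)) '' A)

/-- Dual cone of a set. -/
def dualCone' {q : ℕ} (C : Set (Fin q → ℝ)) : Set (Fin q → ℝ) :=
  {w | ∀ y ∈ C, 0 ≤ dotp w y}

namespace Stmt3Aux

variable {q : ℕ}

lemma dotp_add (w a b : Fin q → ℝ) : dotp w (a + b) = dotp w a + dotp w b := by
  simp [dotp, mul_add, Finset.sum_add_distrib]

lemma dotp_sub (w a b : Fin q → ℝ) : dotp w (a - b) = dotp w a - dotp w b := by
  simp [dotp, mul_sub, Finset.sum_sub_distrib]

lemma dotp_smul (w : Fin q → ℝ) (t : ℝ) (z : Fin q → ℝ) :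
    dotp w (t • z) = t * dotp w z := by
  unfold dotp
  rw [Finset.mul_sum]
  exact Finset.sum_congr rfl fun i _ => by simp; ring

lemma dotp_smul_left (w : Fin q → ℝ) (t : ℝ) (z : Fin q → ℝ) :
    dotp (t • w) z = t * dotp w z := by
  unfold dotp
  rw [Finset.mul_sum]
  exact Finset.sum_congr rfl fun i _ => by simp; ring

lemma dotp_zero_left (z : Fin q → ℝ) : dotp (0 : Fin q → ℝ) z = 0 := by simp [dotp]

lemma dotp_eq_clm (f : (Fin q → ℝ) →L[ℝ] ℝ) (z : Fin q → ℝ) :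
    dotp (fun i => f (Pi.single i 1)) z = f z := by
  have hz : z = ∑ i, Pi.single i (z i) := (Finset.univ_sum_single z).symm
  conv_rhs => rw [hz]
  rw [map_sum]
  unfold dotp
  congr 1; funext i
  have h1 : Pi.single i (z i) = z i • (Pi.single i 1 : Fin q → ℝ) := by
    rw [← Pi.single_smul]; simp
  rw [h1, map_smul, smul_eq_mul, mul_comm]

section NormFn

variable {N : (Fin q → ℝ) → ℝ}

lemma N_zero (hN : IsNormFn N) : N 0 = 0 := (hN.1 0).2 rfl

lemma N_neg (hN : IsNormFn N) (z : Fin q → ℝ) : N (-z) = N z := by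
  have := hN.2.1 (-1) z
  simpa using this

lemma N_nonneg (hN : IsNormFn N) (z : Fin q → ℝ) : 0 ≤ N z := by
  have h := hN.2.2 z (-z)
  rw [add_neg_cancel, N_zero hN, N_neg hN] at h
  linarith

lemma N_sum_le (hN : IsNormFn N) {ι : Type*} (s : Finset ι) (f : ι → (Fin q → ℝ)) :
    N (∑ i ∈ s, f i) ≤ ∑ i ∈ s, N (f i) := by
  classical
  induction s using Finset.induction with
  | empty => simp [N_zero hN]
  | @insert a s h ih =>
    rw [Finset.sum_insert h, Finset.sum_insert h]
    exact le_trans (hN.2.2 _ _) (by linarith)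

lemma N_continuous (hN : IsNormFn N) : Continuous N := by
  have lip : ∀ a b : Fin q → ℝ, N a - N b ≤ N (a - b) := by
    intro a b
    have := hN.2.2 (a - b) b
    simp at this; linarith
  set K := ∑ i : Fin q, N (Pi.single i 1) with hK
  have hbound : ∀ z : Fin q → ℝ, N z ≤ K * ‖z‖ := by
    intro z
    have h1 : z = ∑ i, (z i) • (Pi.single i 1 : Fin q → ℝ) := by
      conv_lhs => rw [← Finset.univ_sum_single z]
      exact Finset.sum_congr rfl fun i _ => by rw [← Pi.single_smul]; simp
    calc N z = N (∑ i, (z i) • (Pi.single i 1 : Fin q → ℝ)) := by rw [← h1]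
      _ ≤ ∑ i, N ((z i) • (Pi.single i 1 : Fin q → ℝ)) := N_sum_le hN _ _
      _ = ∑ i, |z i| * N (Pi.single i 1) := by simp [hN.2.1]
      _ ≤ ∑ i, ‖z‖ * N (Pi.single i 1) := by
          apply Finset.sum_le_sum; intro i _
          exact mul_le_mul_of_nonneg_right
            (by simpa using norm_le_pi_norm z i) (N_nonneg hN _)
      _ = K * ‖z‖ := by rw [hK, Finset.sum_mul]; exact Finset.sum_congr rfl fun i _ => by ring
  have hKnn : 0 ≤ K := Finset.sum_nonneg fun i _ => N_nonneg hN _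
  apply LipschitzWith.continuous (K := Real.toNNReal K)
  apply LipschitzWith.of_dist_le_mul
  intro a b
  rw [Real.dist_eq, dist_eq_norm]
  rw [abs_le]
  constructor
  · have h1 := lip b a
    have h2 := hbound (b - a)
    rw [← norm_neg, neg_sub] at h2
    simp only [Real.coe_toNNReal _ hKnn]
    linarith
  · have h1 := lip a b
    have h2 := hbound (a - b)
    simp only [Real.coe_toNNReal _ hKnn]
    linarith

lemma N_lower (hN : IsNormFn N) {y0 : Fin q → ℝ} (hy0 : y0 ≠ 0) :
    ∃ m > 0, ∀ z : Fin q → ℝ, m * ‖z‖ ≤ N z := by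
  have hS : IsCompact (Metric.sphere (0 : Fin q → ℝ) 1) := isCompact_sphere _ _
  have hSne : (Metric.sphere (0 : Fin q → ℝ) 1).Nonempty := by
    refine ⟨‖y0‖⁻¹ • y0, ?_⟩
    have h : ‖y0‖ ≠ 0 := norm_ne_zero_iff.2 hy0
    simp [mem_sphere_zero_iff_norm, norm_smul, abs_of_nonneg (inv_nonneg.2 (norm_nonneg y0)),
      inv_mul_cancel₀ h]
  obtain ⟨z0, hz0S, hz0min⟩ := hS.exists_isMinOn hSne (N_continuous hN).continuousOn
  have hz0n : ‖z0‖ = 1 := mem_sphere_zero_iff_norm.1 hz0S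
  have hz0ne : z0 ≠ 0 := by intro h; rw [h] at hz0n; simp at hz0n
  have hm : 0 < N z0 := by
    rcases lt_or_eq_of_le (N_nonneg hN z0) with h | h
    · exact h
    · exact absurd ((hN.1 z0).1 h.symm) hz0ne
  refine ⟨N z0, hm, fun z => ?_⟩
  rcases eq_or_ne z 0 with rfl | hz
  · simp [N_zero hN]
  · have hnz : (0:ℝ) < ‖z‖ := norm_pos_iff.2 hz
    have hmem : ‖z‖⁻¹ • z ∈ Metric.sphere (0 : Fin q → ℝ) 1 := by
      simp [mem_sphere_zero_iff_norm, norm_smul, abs_of_nonneg (inv_nonneg.2 (norm_nonneg z)),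
        inv_mul_cancel₀ hnz.ne']
    have h3 : N z0 ≤ N (‖z‖⁻¹ • z) := hz0min hmem
    have h2 : N (‖z‖⁻¹ • z) = ‖z‖⁻¹ * N z := by
      rw [hN.2.1]; congr 1; exact abs_of_nonneg (inv_nonneg.2 (norm_nonneg z))
    rw [h2] at h3
    calc N z0 * ‖z‖ ≤ (‖z‖⁻¹ * N z) * ‖z‖ := by nlinarith
      _ = N z := by field_simp

end NormFn

end Stmt3Aux

open Stmt3Aux in
/-- existence of optimal solutions of (P(v)) and (D(v)) and strong duality. -/
theorem stmt3 {q n : ℕ}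
    (N : (Fin q → ℝ) → ℝ) (hN : IsNormFn N)
    (C : Set (Fin q → ℝ))
    (hCclosed : IsClosed C) (hCconv : Convex ℝ C)
    (hCcone : ∀ t : ℝ, 0 ≤ t → ∀ y ∈ C, t • y ∈ C)
    (hCsolid : (interior C).Nonempty)
    (hCpointed : ∀ y ∈ C, -y ∈ C → y = 0)
    (hCnontriv : {(0 : Fin q → ℝ)} ⊂ C ∧ C ⊂ Set.univ)
    (X : Set (Fin n → ℝ)) (hX : IsCompact X) (hXconv : Convex ℝ X)
    (hXint : (interior X).Nonempty)
    (Γ : (Fin n → ℝ) → (Fin q → ℝ)) (hΓ : ContinuousOn Γ X)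
    (hΓconv : ∀ x₁ ∈ X, ∀ x₂ ∈ X, ∀ t : ℝ, t ∈ Icc (0:ℝ) 1 →
      t • Γ x₁ + (1 - t) • Γ x₂ - Γ (t • x₁ + (1 - t) • x₂) ∈ C)
    (v : Fin q → ℝ) :
    ∃ xv ∈ X, ∃ zv : Fin q → ℝ,
      v + zv - Γ xv ∈ C ∧ N zv = distFn N v (Γ '' X + C) ∧
      ∃ wv ∈ dualCone' C, dualNormFn N wv ≤ 1 ∧
        sInf ((fun x => dotp wv (Γ x)) '' X) - dotp wv v = N zv := by
  classical
  -- basic facts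
  have h0C : (0 : Fin q → ℝ) ∈ C := hCnontriv.1.1 rfl
  obtain ⟨y0, hy0C, hy0ne⟩ : ∃ y0 ∈ C, y0 ≠ 0 := by
    obtain ⟨y0, hy0, hy0n⟩ := Set.exists_of_ssubset hCnontriv.1
    exact ⟨y0, hy0, fun h => hy0n (h ▸ rfl)⟩
  have hXne : X.Nonempty := hXint.mono interior_subset
  have hCadd : ∀ a ∈ C, ∀ b ∈ C, a + b ∈ C := by
    intro a ha b hb
    have h := hCconv ha hb (by norm_num : (0:ℝ) ≤ 1/2) (by norm_num : (0:ℝ) ≤ 1/2) (by norm_num)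
    have h2 := hCcone 2 (by norm_num) _ h
    have e : (2:ℝ) • ((1/2:ℝ) • a + (1/2:ℝ) • b) = a + b := by module
    rwa [e] at h2
  set P : Set (Fin q → ℝ) := Γ '' X + C with hP
  have hPconv : Convex ℝ P := by
    intro y1 hy1 y2 hy2 a b ha hb hab
    rcases Set.mem_add.1 hy1 with ⟨g1, ⟨x1, hx1, rfl⟩, c1, hc1, rfl⟩
    rcases Set.mem_add.1 hy2 with ⟨g2, ⟨x2, hx2, rfl⟩, c2, hc2, rfl⟩
    have hb' : b = 1 - a := by linarith
    subst hb'
    apply Set.mem_add.2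
    refine ⟨Γ (a • x1 + (1-a) • x2), ⟨_, hXconv hx1 hx2 ha hb hab, rfl⟩,
      (a • Γ x1 + (1-a) • Γ x2 - Γ (a • x1 + (1-a) • x2)) + (a • c1 + (1-a) • c2), ?_, by module⟩
    exact hCadd _ (hΓconv x1 hx1 x2 hx2 a ⟨ha, by linarith⟩) _
      (hCadd _ (hCcone a ha c1 hc1) _ (hCcone (1-a) hb c2 hc2))
  have hPmem : ∀ x ∈ X, ∀ c ∈ C, Γ x + c ∈ P :=
    fun x hx c hc => Set.mem_add.2 ⟨Γ x, ⟨x, hx, rfl⟩, c, hc, rfl⟩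
  have hNsub : ∀ a b : Fin q → ℝ, N (a - b) ≤ N a + N b := by
    intro a b
    have h := hN.2.2 a (-b)
    rwa [← sub_eq_add_neg, N_neg hN] at h
  -- maximum of N (v - Γ x) on X
  obtain ⟨xm, hxmX, hxmmax⟩ := hX.exists_isMaxOn (f := fun x => N (v - Γ x)) hXne
    ((N_continuous hN).comp_continuousOn ((continuousOn_const (c := v)).sub hΓ))
  set R0 : ℝ := N (v - Γ xm) with hR0
  have hR0nn : 0 ≤ R0 := N_nonneg hN _
  -- compact feasible region
  obtain ⟨m, hm, hmN⟩ := N_lower hN hy0ne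
  have hSc : IsCompact (C ∩ {c : Fin q → ℝ | N c ≤ R0 + R0}) := by
    apply Metric.isCompact_of_isClosed_isBounded
    · exact hCclosed.inter (isClosed_le (N_continuous hN) continuous_const)
    · rw [isBounded_iff_forall_norm_le]
      refine ⟨(R0 + R0) / m, fun c hc => ?_⟩
      rw [le_div_iff₀ hm]
      have h2 : N c ≤ R0 + R0 := hc.2
      linarith [hmN c, mul_comm m ‖c‖]
  have hK : IsCompact (X ×ˢ (C ∩ {c : Fin q → ℝ | N c ≤ R0 + R0})) :=
    hX.prod hSc
  have hKne : ((xm, (0 : Fin q → ℝ))) ∈ X ×ˢ (C ∩ {c : Fin q → ℝ | N c ≤ R0 + R0}) := by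
    refine ⟨hxmX, h0C, ?_⟩
    simp only [Set.mem_setOf_eq, N_zero hN]
    linarith
  have hgcont : ContinuousOn (fun p : (Fin n → ℝ) × (Fin q → ℝ) => N (v - Γ p.1 - p.2))
      (X ×ˢ (C ∩ {c : Fin q → ℝ | N c ≤ R0 + R0})) := by
    apply (N_continuous hN).comp_continuousOn
    exact (continuousOn_const.sub (hΓ.comp continuousOn_fst fun p hp => hp.1)).sub
      continuousOn_snd
  obtain ⟨⟨xs, cs⟩, ⟨hxsX, hcsC, _⟩, hmin⟩ := hK.exists_isMinOn ⟨_, hKne⟩ hgcont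
  set dd : ℝ := N (v - Γ xs - cs) with hdd
  have hddnn : 0 ≤ dd := N_nonneg hN _
  -- optimality over all of P
  have hopt : ∀ y ∈ P, dd ≤ N (v - y) := by
    intro y hy
    rcases Set.mem_add.1 hy with ⟨g1, ⟨x, hx, rfl⟩, c, hc, rfl⟩
    by_cases hb : N (v - (Γ x + c)) ≤ R0
    · have hcR : N c ≤ R0 + R0 := by
        have e : c = (v - Γ x) - (v - (Γ x + c)) := by module
        rw [e]
        have h1 := hNsub (v - Γ x) (v - (Γ x + c))
        have h2 : N (v - Γ x) ≤ R0 := hxmmax hx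
        linarith
      have := hmin (Set.mk_mem_prod hx ⟨hc, hcR⟩)
      simpa [hdd, sub_sub] using this
    · push_neg at hb
      have h1 : dd ≤ R0 := by
        have := hmin hKne
        simpa [hdd, hR0] using this
      linarith
  have hydd : Γ xs + cs ∈ P := hPmem xs hxsX cs hcsC
  have hbddB : BddBelow ((fun y => N (v - y)) '' P) :=
    ⟨0, fun r ⟨z, _, hz⟩ => hz ▸ N_nonneg hN _⟩
  have hdist : distFn N v P = dd := by
    apply le_antisymm
    · apply csInf_le hbddB
      exact ⟨Γ xs + cs, hydd, by rw [hdd, sub_sub]⟩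
    · exact le_csInf ⟨_, Γ xs + cs, hydd, rfl⟩ (fun r ⟨z, hz, hr⟩ => hr ▸ hopt z hz)
  by_cases hd0 : dd = 0
  · -- v ∈ P : take zv = 0, wv = 0
    have hveq : v - Γ xs - cs = 0 := (hN.1 _).1 hd0
    refine ⟨xs, hxsX, 0, ?_, ?_, 0, ?_, ?_, ?_⟩
    · have e : v + 0 - Γ xs = cs := by
        have : v - Γ xs = cs := by
          have := hveq; funext i; have := congrFun hveq i
          simp only [Pi.sub_apply, Pi.zero_apply] at this ⊢
          linarith
        rw [add_zero, this]
      rw [e]; exact hcsC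
    · rw [N_zero hN, hdist, hd0]
    · intro y hy; rw [dotp_zero_left]
    · apply Real.sSup_le _ zero_le_one
      rintro r ⟨z, hz, rfl⟩
      show dotp (0 : Fin q → ℝ) z ≤ 1
      rw [dotp_zero_left]; exact zero_le_one
    · have himg : (fun x => dotp (0 : Fin q → ℝ) (Γ x)) '' X = {0} := by
        have e : (fun x => dotp (0 : Fin q → ℝ) (Γ x)) = fun _ => (0:ℝ) :=
          funext fun x => dotp_zero_left _
        rw [e]
        exact hXne.image_const 0
      rw [himg, csInf_singleton, dotp_zero_left, N_zero hN, sub_zero]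
  · have hd : 0 < dd := lt_of_le_of_ne hddnn (Ne.symm hd0)
    -- separation
    set U : Set (Fin q → ℝ) := {u | N (v - u) < dd} with hU
    have hUopen : IsOpen U :=
      isOpen_lt ((N_continuous hN).comp (continuous_const.sub continuous_id)) continuous_const
    have hUconv : Convex ℝ U := by
      intro u1 h1 u2 h2 a b ha hb hab
      have hb' : b = 1 - a := by linarith
      subst hb'
      have e : v - (a • u1 + (1-a) • u2) = a • (v - u1) + (1-a) • (v - u2) := by module
      have htr : N (v - (a • u1 + (1-a) • u2)) ≤ a * N (v - u1) + (1-a) * N (v - u2) := by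
        rw [e]
        refine le_trans (hN.2.2 _ _) ?_
        rw [hN.2.1, hN.2.1, abs_of_nonneg ha, abs_of_nonneg hb]
      have h1' : N (v - u1) < dd := h1
      have h2' : N (v - u2) < dd := h2
      show N (v - (a • u1 + (1-a) • u2)) < dd
      rcases eq_or_lt_of_le ha with h | hapos
      · have e2 : a • u1 + (1-a) • u2 = u2 := by rw [← h]; module
        rw [e2]; exact h2'
      · calc N (v - (a • u1 + (1-a) • u2)) ≤ a * N (v - u1) + (1-a) * N (v - u2) := htr
          _ < dd := by
            nlinarith [mul_lt_mul_of_pos_left h1' hapos,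
              mul_le_mul_of_nonneg_left h2'.le hb]
    have hUP : Disjoint U P := by
      rw [Set.disjoint_left]
      intro u hu huP
      exact absurd (hopt u huP) (not_le.2 hu)
    obtain ⟨f, α, hfU, hfP⟩ := geometric_hahn_banach_open hUconv hUopen hPconv hUP
    set w : Fin q → ℝ := fun i => f (Pi.single i 1) with hw
    have hfw : ∀ z, dotp w z = f z := dotp_eq_clm f
    have hvU : v ∈ U := by
      show N (v - v) < dd
      rw [sub_self, N_zero hN]; exact hd
    have hfvα : f v < α := hfU v hvU
    have hxmP : Γ xm ∈ P := by
      have := hPmem xm hxmX 0 h0C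
      rwa [add_zero] at this
    -- w ∈ dual cone
    have hwC : ∀ c ∈ C, 0 ≤ dotp w c := by
      intro c hc
      by_contra hneg
      push_neg at hneg
      set t : ℝ := (f (Γ xm) - α + 1) / (-(dotp w c)) with ht
      have hαxm : α ≤ f (Γ xm) := hfP _ hxmP
      have htpos : 0 ≤ t := by
        apply div_nonneg (by linarith) (by linarith)
      have hmem : Γ xm + t • c ∈ P := hPmem xm hxmX _ (hCcone t htpos c hc)
      have h2 := hfP _ hmem
      rw [map_add, map_smul, smul_eq_mul, ← hfw c] at h2
      have hne : dotp w c ≠ 0 := ne_of_lt hneg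
      have h3 : t * dotp w c = -(f (Γ xm) - α + 1) := by
        rw [ht, div_neg, neg_mul, div_mul_cancel₀ _ hne]
      rw [h3] at h2
      linarith
    -- key inequality
    have key : ∀ z : Fin q → ℝ, N z ≤ 1 → dd * dotp w z ≤ α - f v := by
      intro z hz
      have hstep : ∀ t : ℝ, 0 ≤ t → t < dd → t * dotp w z < α - f v := by
        intro t ht htd
        have hmem : v + t • z ∈ U := by
          show N (v - (v + t • z)) < dd
          have e : v - (v + t • z) = (-t) • z := by module
          rw [e, hN.2.1, abs_neg, abs_of_nonneg ht]
          calc t * N z ≤ t * 1 := mul_le_mul_of_nonneg_left hz ht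
            _ = t := mul_one t
            _ < dd := htd
        have h2 := hfU _ hmem
        rw [map_add, map_smul, smul_eq_mul, ← hfw z] at h2
        linarith
      rcases le_or_gt (dotp w z) 0 with hp | hp
      · nlinarith
      · by_contra hcon
        push_neg at hcon
        have h0' : 0 < α - f v := by linarith
        set t : ℝ := (α - f v) / dotp w z with ht
        have ht0 : 0 ≤ t := le_of_lt (div_pos h0' hp)
        have htd : t < dd := by
          rw [ht, div_lt_iff₀ hp]; linarith
        have := hstep t ht0 htd
        rw [ht, div_mul_cancel₀ _ hp.ne'] at this
        linarith
    have hbddA : BddAbove ((fun z => dotp w z) '' {z | N z ≤ 1}) := by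
      refine ⟨(α - f v) / dd, ?_⟩
      rintro r ⟨z, hz, rfl⟩
      rw [le_div_iff₀ hd]
      have := key z hz
      linarith [mul_comm dd (dotp w z)]
    set M : ℝ := dualNormFn N w with hM
    have hMle : dd * M ≤ α - f v := by
      have h1 : M ≤ (α - f v) / dd := by
        apply Real.sSup_le
        · rintro r ⟨z, hz, rfl⟩
          rw [le_div_iff₀ hd]
          have := key z hz
          linarith [mul_comm dd (dotp w z)]
        · apply div_nonneg (by linarith) hd.le
      calc dd * M ≤ dd * ((α - f v) / dd) := mul_le_mul_of_nonneg_left h1 hd.le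
        _ = α - f v := by field_simp
    have hMpos : 0 < M := by
      have hfne : ∃ z, 0 < dotp w z := by
        by_contra hall
        push_neg at hall
        have h1 : ∀ z, dotp w z = 0 := by
          intro z
          have ha := hall z
          have hb := hall (-z)
          have : dotp w (-z) = -dotp w z := by
            have := dotp_smul w (-1) z
            simpa using this
          rw [this] at hb
          linarith
        have h2 : f v = 0 := by rw [← hfw]; exact h1 v
        have h3 : f (Γ xm) = 0 := by rw [← hfw]; exact h1 _
        have h4 := hfP _ hxmP
        rw [h3] at h4
        linarith
      obtain ⟨z1, hz1⟩ := hfne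
      have hz1ne : z1 ≠ 0 := by
        intro h; rw [h] at hz1; simp [dotp] at hz1
      have hNz1 : 0 < N z1 := by
        rcases lt_or_eq_of_le (N_nonneg hN z1) with h | h
        · exact h
        · exact absurd ((hN.1 z1).1 h.symm) hz1ne
      have hmem : (N z1)⁻¹ • z1 ∈ {z | N z ≤ 1} := by
        show N ((N z1)⁻¹ • z1) ≤ 1
        rw [hN.2.1, abs_of_nonneg (inv_nonneg.2 hNz1.le), inv_mul_cancel₀ hNz1.ne']
      have h5 : dotp w ((N z1)⁻¹ • z1) ≤ M := le_csSup hbddA ⟨_, hmem, rfl⟩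
      rw [dotp_smul] at h5
      calc (0:ℝ) < (N z1)⁻¹ * dotp w z1 := by positivity
        _ ≤ M := h5
    set wv : Fin q → ℝ := M⁻¹ • w with hwv
    have hwvdot : ∀ z, dotp wv z = M⁻¹ * dotp w z := fun z => dotp_smul_left w M⁻¹ z
    have hwv1 : ∀ z : Fin q → ℝ, N z ≤ 1 → dotp wv z ≤ 1 := by
      intro z hz
      rw [hwvdot]
      have h1 : dotp w z ≤ M := le_csSup hbddA ⟨z, hz, rfl⟩
      calc M⁻¹ * dotp w z ≤ M⁻¹ * M := mul_le_mul_of_nonneg_left h1 (inv_nonneg.2 hMpos.le)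
        _ = 1 := inv_mul_cancel₀ hMpos.ne'
    -- primal solution
    set zv : Fin q → ℝ := Γ xs + cs - v with hzv
    have hzvC : v + zv - Γ xs = cs := by module
    have hNzv : N zv = dd := by
      have e : zv = -(v - Γ xs - cs) := by module
      rw [e, N_neg hN]
    -- bounds
    have hlower : ∀ x ∈ X, dd + dotp wv v ≤ dotp wv (Γ x) := by
      intro x hx
      have hα : α ≤ f (Γ x) := by
        apply hfP
        have := hPmem x hx 0 h0C
        rwa [add_zero] at this
      have h1 : dd * M ≤ dotp w (Γ x) - dotp w v := by
        rw [hfw, hfw]; linarith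
      have h2 := mul_le_mul_of_nonneg_left h1 (inv_nonneg.2 hMpos.le)
      have e : M⁻¹ * (dd * M) = dd := by field_simp
      rw [e, mul_sub] at h2
      rw [hwvdot, hwvdot]
      linarith
    have hupper : dotp wv (Γ xs) ≤ dd + dotp wv v := by
      have hcs : 0 ≤ dotp wv cs := by
        rw [hwvdot]
        exact mul_nonneg (inv_nonneg.2 hMpos.le) (hwC cs hcsC)
      have hzvle : dotp wv zv ≤ dd := by
        have hmem : N (dd⁻¹ • zv) ≤ 1 := by
          rw [hN.2.1, abs_of_nonneg (inv_nonneg.2 hd.le), hNzv, inv_mul_cancel₀ hd.ne']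
        have h6 := hwv1 _ hmem
        rw [dotp_smul] at h6
        have h7 := mul_le_mul_of_nonneg_left h6 hd.le
        rw [← mul_assoc, mul_inv_cancel₀ hd.ne', one_mul, mul_one] at h7
        exact h7
      have e : Γ xs = v + zv - cs := by
        rw [hzv]; module
      rw [e, dotp_sub, dotp_add]
      linarith
    refine ⟨xs, hxsX, zv, by rw [hzvC]; exact hcsC, by rw [hNzv, hdist], wv, ?_, ?_, ?_⟩
    · intro c hc
      rw [hwvdot]
      exact mul_nonneg (inv_nonneg.2 hMpos.le) (hwC c hc)
    · exact Real.sSup_le (by rintro r ⟨z, hz, rfl⟩; exact hwv1 z hz) zero_le_one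
    · have hinf : sInf ((fun x => dotp wv (Γ x)) '' X) = dd + dotp wv v := by
        apply le_antisymm
        · calc sInf ((fun x => dotp wv (Γ x)) '' X)
              ≤ dotp wv (Γ xs) := csInf_le
                ⟨dd + dotp wv v, by rintro r ⟨x, hx, rfl⟩; exact hlower x hx⟩
                ⟨xs, hxsX, rfl⟩
            _ ≤ dd + dotp wv v := hupper
        · exact le_csInf ⟨_, xm, hxmX, rfl⟩ (by rintro r ⟨x, hx, rfl⟩; exact hlower x hx)
      rw [hinf, hNzv]; ring
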